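/- Let F be a field of characteristic zero. For x ∈ M₂(F), write x^ι = tr(x)·I₂ - x (so that x·x^ι = det(x)·I₂), and for a pair (x, y) ∈ M₂(F) ⊕ M₂(F) set P(x, y) = -det(x·y^ι - y·x^ι). Then for all g₁, g₂ ∈ GL₂(F) and g₃ = (a b; c d) ∈ GL₂(F), one has P(a·g₁^{-1}xg₂ + c·g₁^{-1}yg₂, b·g₁^{-1}xg₂ + d·g₁^{-1}yg₂) = det(g₁)^{-2}·det(g₂)²·det(g₃)²·P(x, y). -/
import Mathlib


/-- The main involution on `M₂(F)`: `x^ι = tr(x)·I₂ - x`. -/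
def quatInvol {F : Type} [Field F] (x : Matrix (Fin 2) (Fin 2) F) :
    Matrix (Fin 2) (Fin 2) F :=
  Matrix.trace x • (1 : Matrix (Fin 2) (Fin 2) F) - x

/-- The fundamental relative invariant `P(x,y) = -det(x y^ι - y x^ι)`. -/
def relInvP {F : Type} [Field F] (x y : Matrix (Fin 2) (Fin 2) F) : F :=
  -Matrix.det (x * quatInvol y - y * quatInvol x)

lemma relInvP_mix {F : Type} [Field F] (x y : Matrix (Fin 2) (Fin 2) F) (a b c d : F) :
    relInvP (a • x + c • y) (b • x + d • y) = (a * d - b * c) ^ 2 * relInvP x y := by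
  simp only [relInvP, quatInvol, Matrix.det_fin_two, Matrix.sub_apply, Matrix.add_apply,
    Matrix.mul_apply, Matrix.smul_apply, Matrix.one_apply, Matrix.trace_fin_two,
    Fin.sum_univ_two, smul_eq_mul]
  norm_num
  ring

lemma relInvP_mul {F : Type} [Field F] (x y g h : Matrix (Fin 2) (Fin 2) F) :
    relInvP (g * x * h) (g * y * h) = g.det ^ 2 * h.det ^ 2 * relInvP x y := by
  simp only [relInvP, quatInvol, Matrix.det_fin_two, Matrix.sub_apply, Matrix.add_apply,
    Matrix.mul_apply, Matrix.smul_apply, Matrix.one_apply, Matrix.trace_fin_two,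
    Fin.sum_univ_two, smul_eq_mul]
  norm_num
  ring

theorem stmt12 (F : Type) [Field F] [CharZero F]
    (x y : Matrix (Fin 2) (Fin 2) F)
    (g₁ g₂ : Matrix (Fin 2) (Fin 2) F) (hg₁ : IsUnit g₁.det) (hg₂ : IsUnit g₂.det)
    (a b c d : F) (hg₃ : a * d - b * c ≠ 0) :
    relInvP (a • (g₁⁻¹ * x * g₂) + c • (g₁⁻¹ * y * g₂))
        (b • (g₁⁻¹ * x * g₂) + d • (g₁⁻¹ * y * g₂)) =
      g₁.det⁻¹ ^ 2 * g₂.det ^ 2 * (a * d - b * c) ^ 2 * relInvP x y := by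
  rw [relInvP_mix, relInvP_mul, Matrix.det_nonsing_inv, Ring.inverse_eq_inv]
  ring
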